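/- For every z ∈ ℂ with |z| ≤ 1/3, one has Re(1/(1-z)³) ≥ 27/64, and equality holds at z = -1/3. -/

import Mathlib

open Complex
lemma key (x y : ℝ) (h : (1-x)^2 + y^2 ≤ 1/9) :
    27/64*(x^2+y^2)^3 ≤ x^3 - 3*x*y^2 := by
  have hx1 : 2/3 ≤ x := by nlinarith [sq_nonneg y]
  have hx2 : x ≤ 4/3 := by nlinarith [sq_nonneg y]
  have ht : x^2 + y^2 ≤ 2*x - 8/9 := by nlinarith
  have hs : (0:ℝ) ≤ x^2 + y^2 := by positivity
  nlinarith [mul_nonneg (sub_nonneg.2 ht) (sub_nonneg.2 hx1),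
    mul_nonneg (mul_nonneg (sub_nonneg.2 ht) hs) hs,
    mul_nonneg (sub_nonneg.2 ht) (sq_nonneg (x^2+y^2)),
    mul_nonneg (sub_nonneg.2 hx2) (sq_nonneg x),
    mul_nonneg (sub_nonneg.2 ht) (mul_nonneg hs (by linarith : (0:ℝ) ≤ 2*x-8/9)),
    mul_nonneg (sub_nonneg.2 ht) (sq_nonneg (2*x-8/9)),
    mul_nonneg (sub_nonneg.2 hx2) (by nlinarith : (0:ℝ) ≤ 2/9 + 2*x/3 - 5/8*x^2)]

theorem re_inv_one_sub_cube_ge :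
    (∀ z : ℂ, ‖z‖ ≤ 1/3 → 27/64 ≤ (1 / (1 - z) ^ 3).re) ∧
    (1 / (1 - (-(1/3) : ℂ)) ^ 3).re = 27/64 := by
  constructor
  · intro z hz
    have h9 : (1 - (1 - z.re))^2 + z.im^2 ≤ 1/9 := by
      have h1 : ‖z‖ ^ 2 ≤ (1/3)^2 := by
        have := norm_nonneg z
        nlinarith
      rw [Complex.sq_norm, Complex.normSq_apply] at h1
      nlinarith
    have hk := key (1 - z.re) z.im h9
    have hx1 : (2:ℝ)/3 ≤ 1 - z.re := by nlinarith [sq_nonneg z.im]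
    have hden : (0:ℝ) < ((1 - z.re)^2 + z.im^2)^3 := by positivity
    have hw : (1/(1-z)^3).re
        = ((1-z.re)^3 - 3*(1-z.re)*z.im^2) / ((1-z.re)^2 + z.im^2)^3 := by
      rw [one_div, Complex.inv_re]
      congr 1
      · simp [pow_succ, Complex.mul_re, Complex.mul_im, Complex.sub_re,
          Complex.sub_im, Complex.one_re, Complex.one_im]
        ring
      · rw [map_pow, Complex.normSq_apply]
        simp [Complex.sub_re, Complex.sub_im]
        ring
    rw [hw, le_div_iff₀ hden]
    nlinarith [hk]
  · have h1 : (1 - (-(1/3) : ℂ))^3 = 64/27 := by norm_num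
    rw [h1]
    norm_num [Complex.div_re, Complex.normSq_apply]
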